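/- In the algebra A of the previous statement, U = δ·(H-ξ)(H-ζ)(H-ζ*)(H-τ)/((φ-ξ)(φ-ζ)(φ-ζ*)(φ-τ)) and K = φ·(H-ξ)(H-ζ)(H-ζ*)(H-φ)/((τ-ξ)(τ-ζ)(τ-ζ*)(τ-φ)); in particular A is generated by H alone. -/
import Mathlib


/-- The two-variable quantum integer `[aν+b] = (p^a q^b - p^{-a} q^{-b})/(q - q⁻¹)`. -/
noncomputable def qint {K : Type*} [Field K] (p q : K) (a b : ℤ) : K :=
  (p ^ a * q ^ b - p ^ (-a) * q ^ (-b)) / (q - q⁻¹)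

/-- `δ = [6ν+1][5ν-1][4ν]/([ν+1][2ν])`. -/
noncomputable def deltaE {K : Type*} [Field K] (p q : K) : K :=
  qint p q 6 1 * qint p q 5 (-1) * qint p q 4 0 / (qint p q 1 1 * qint p q 2 0)

/-- `φ = [3ν][6ν+2][4ν-2]/([ν][3ν+1][2ν-1])`. -/
noncomputable def phiE {K : Type*} [Field K] (p q : K) : K :=
  qint p q 3 0 * qint p q 6 2 * qint p q 4 (-2)
    / (qint p q 1 0 * qint p q 3 1 * qint p q 2 (-1))

/-- `τ = ([4ν]/[2ν])(([6ν+2]/[3ν+1])([4ν-2]/[2ν-1])([3ν]/[ν]) + (q-q⁻¹)²[ν+1][5ν]/[ν])`. -/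
noncomputable def tauE {K : Type*} [Field K] (p q : K) : K :=
  (qint p q 4 0 / qint p q 2 0) *
    ((qint p q 6 2 / qint p q 3 1) * (qint p q 4 (-2) / qint p q 2 (-1)) *
        (qint p q 3 0 / qint p q 1 0) +
      (q - q⁻¹) ^ 2 * qint p q 1 1 * (qint p q 5 0 / qint p q 1 0))

/-- `ξ = (q-q⁻¹)(pq - p⁻¹q⁻¹)`. -/
noncomputable def xiE {K : Type*} [Field K] (p q : K) : K :=
  (q - q⁻¹) * (p * q - p⁻¹ * q⁻¹)

/-- `ζ = -[4ν-2]/([2ν-1][ν])`. -/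
noncomputable def zetaE {K : Type*} [Field K] (p q : K) : K :=
  -(qint p q 4 (-2) / (qint p q 2 (-1) * qint p q 1 0))

/-- `ζ* = [6ν+2][ν+1]/([3ν+1][ν])`. -/
noncomputable def zetaStarE {K : Type*} [Field K] (p q : K) : K :=
  qint p q 6 2 * qint p q 1 1 / (qint p q 3 1 * qint p q 1 0)

/-- In any commutative `Q(p,q)`-algebra `A` with elements `H, K, U` satisfying the defining
relations of the two-string algebra `A(2)`, and assuming the five eigenvalues
`ξ, ζ, ζ*, φ, τ` are pairwise distinct, `U` and `K` are recovered from `H` by Lagrange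
interpolation. -/
theorem stmt14 {F : Type*} [Field F] (p q : F) (hp : p ≠ 0) (hq : q ≠ 0)
    (hqq : q - q⁻¹ ≠ 0) (hδ : deltaE p q ≠ 0) (hφ : phiE p q ≠ 0)
    (hdist : List.Pairwise (· ≠ ·)
      [xiE p q, zetaE p q, zetaStarE p q, phiE p q, tauE p q])
    {A : Type*} [CommRing A] [Algebra F A] (H K U : A)
    (hU2 : U * U = deltaE p q • U)
    (hUK : U * K = 0) (hKU : K * U = 0)
    (hK2 : K * K = phiE p q • K)
    (hHU : H * U = phiE p q • U) (hUH : U * H = phiE p q • U)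
    (hHK : H * K = tauE p q • K) (hKH : K * H = tauE p q • K)
    (hcubic :
      (H - xiE p q • 1) * (H - zetaE p q • 1) * (H - zetaStarE p q • 1)
        = ((deltaE p q)⁻¹ * (phiE p q - xiE p q) * (phiE p q - zetaE p q) *
              (phiE p q - zetaStarE p q)) • U +
          ((phiE p q)⁻¹ * (tauE p q - xiE p q) * (tauE p q - zetaE p q) *
              (tauE p q - zetaStarE p q)) • K) :
    U = (deltaE p q /
          ((phiE p q - xiE p q) * (phiE p q - zetaE p q) * (phiE p q - zetaStarE p q) *
            (phiE p q - tauE p q))) •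
        ((H - xiE p q • 1) * (H - zetaE p q • 1) * (H - zetaStarE p q • 1) *
          (H - tauE p q • 1)) ∧
      K = (phiE p q /
            ((tauE p q - xiE p q) * (tauE p q - zetaE p q) * (tauE p q - zetaStarE p q) *
              (tauE p q - phiE p q))) •
          ((H - xiE p q • 1) * (H - zetaE p q • 1) * (H - zetaStarE p q • 1) *
            (H - phiE p q • 1)) := by

  simp only [List.pairwise_cons, List.mem_cons, List.mem_singleton, List.not_mem_nil,
    forall_eq_or_imp, forall_eq] at hdist
  obtain ⟨⟨hξζ, hξζ', hξφ, hξτ, -⟩, ⟨hζζ', hζφ, hζτ, -⟩, ⟨hζ'φ, hζ'τ, -⟩, ⟨hφτ, -⟩, -⟩ := hdist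
  have hφξ := sub_ne_zero.mpr (Ne.symm hξφ)
  have hφζ := sub_ne_zero.mpr (Ne.symm hζφ)
  have hφζ' := sub_ne_zero.mpr (Ne.symm hζ'φ)
  have hφτ' := sub_ne_zero.mpr hφτ
  have hτξ := sub_ne_zero.mpr (Ne.symm hξτ)
  have hτζ := sub_ne_zero.mpr (Ne.symm hζτ)
  have hτζ' := sub_ne_zero.mpr (Ne.symm hζ'τ)
  have hτφ := sub_ne_zero.mpr (Ne.symm hφτ)
  constructor
  · have key : (H - xiE p q • 1) * (H - zetaE p q • 1) * (H - zetaStarE p q • 1) *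
        (H - tauE p q • 1)
        = (((deltaE p q)⁻¹ * (phiE p q - xiE p q) * (phiE p q - zetaE p q) *
            (phiE p q - zetaStarE p q)) * (phiE p q - tauE p q)) • U := by
      rw [hcubic]
      simp only [Algebra.smul_def, map_mul, map_sub, mul_one] at hUH hKH ⊢
      linear_combination (algebraMap F A (deltaE p q)⁻¹ *
          (algebraMap F A (phiE p q) - algebraMap F A (xiE p q)) *
          (algebraMap F A (phiE p q) - algebraMap F A (zetaE p q)) *
          (algebraMap F A (phiE p q) - algebraMap F A (zetaStarE p q))) * hUH +
        (algebraMap F A (phiE p q)⁻¹ *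
          (algebraMap F A (tauE p q) - algebraMap F A (xiE p q)) *
          (algebraMap F A (tauE p q) - algebraMap F A (zetaE p q)) *
          (algebraMap F A (tauE p q) - algebraMap F A (zetaStarE p q))) * hKH
    rw [key, smul_smul]
    have h1 : deltaE p q /
          ((phiE p q - xiE p q) * (phiE p q - zetaE p q) * (phiE p q - zetaStarE p q) *
            (phiE p q - tauE p q)) *
        ((deltaE p q)⁻¹ * (phiE p q - xiE p q) * (phiE p q - zetaE p q) *
            (phiE p q - zetaStarE p q) * (phiE p q - tauE p q)) = 1 := by
      field_simp
    rw [h1, one_smul]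
  · have key : (H - xiE p q • 1) * (H - zetaE p q • 1) * (H - zetaStarE p q • 1) *
        (H - phiE p q • 1)
        = (((phiE p q)⁻¹ * (tauE p q - xiE p q) * (tauE p q - zetaE p q) *
            (tauE p q - zetaStarE p q)) * (tauE p q - phiE p q)) • K := by
      rw [hcubic]
      simp only [Algebra.smul_def, map_mul, map_sub, mul_one] at hUH hKH ⊢
      linear_combination (algebraMap F A (deltaE p q)⁻¹ *
          (algebraMap F A (phiE p q) - algebraMap F A (xiE p q)) *
          (algebraMap F A (phiE p q) - algebraMap F A (zetaE p q)) *
          (algebraMap F A (phiE p q) - algebraMap F A (zetaStarE p q))) * hUH +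
        (algebraMap F A (phiE p q)⁻¹ *
          (algebraMap F A (tauE p q) - algebraMap F A (xiE p q)) *
          (algebraMap F A (tauE p q) - algebraMap F A (zetaE p q)) *
          (algebraMap F A (tauE p q) - algebraMap F A (zetaStarE p q))) * hKH
    rw [key, smul_smul]
    have h1 : phiE p q /
          ((tauE p q - xiE p q) * (tauE p q - zetaE p q) * (tauE p q - zetaStarE p q) *
            (tauE p q - phiE p q)) *
        ((phiE p q)⁻¹ * (tauE p q - xiE p q) * (tauE p q - zetaE p q) *
            (tauE p q - zetaStarE p q) * (tauE p q - phiE p q)) = 1 := by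
      field_simp
    rw [h1, one_smul]
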